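/- The double-threshold allocation p_k = min(γ_k² κ_G², max(γ_k² κ_L², E_k)) with κ_L = η² κ_G satisfies: p_k = γ_k² κ_G² (grid-charging) if E_k > γ_k² κ_G²; p_k = γ_k² κ_L² (grid-discharging) if E_k < γ_k² κ_L²; and p_k = E_k (grid-passive) otherwise. Moreover, the function κ_G ↦ ∑_{k=1}^N [η·max(E_k − γ_k² κ_G², 0) − max(γ_k² η⁴ κ_G² − E_k, 0)/η] is continuous and monotonically non-increasing in κ_G ≥ 0, and is positive at κ_G = 0, so there exists κ_G* ≥ 0 at which the sum of trade states equals zero. -/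

import Mathlib

open Finset

/-- The double-threshold allocation `pₖ = min (γₖ²κ_G²) (max (γₖ²κ_L²) Eₖ)` (with
`κ_L = η²κ_G`) takes the charging/discharging/passive form, and the sum of trade
states as a function of `κ_G` is continuous, non-increasing on `[0,∞)`, positive at
`0`, so it has a zero `κ_G* ≥ 0`. -/
theorem stmt_10 (N : ℕ) (γ E : Fin N → ℝ) (η : ℝ)
    (hγ : ∀ k, 0 < γ k) (hE : ∀ k, 0 < E k) (hη1 : 0 < η) (hη2 : η < 1)
    (hN : 0 < N) :
    (∀ κG : ℝ, 0 < κG →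
      let κL := η ^ 2 * κG
      ∀ k, (E k > γ k ^ 2 * κG ^ 2 →
              min (γ k ^ 2 * κG ^ 2) (max (γ k ^ 2 * κL ^ 2) (E k)) = γ k ^ 2 * κG ^ 2) ∧
           (E k < γ k ^ 2 * κL ^ 2 →
              min (γ k ^ 2 * κG ^ 2) (max (γ k ^ 2 * κL ^ 2) (E k)) = γ k ^ 2 * κL ^ 2) ∧
           (γ k ^ 2 * κL ^ 2 ≤ E k → E k ≤ γ k ^ 2 * κG ^ 2 →
              min (γ k ^ 2 * κG ^ 2) (max (γ k ^ 2 * κL ^ 2) (E k)) = E k)) ∧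
    (Continuous (fun κG : ℝ =>
        ∑ k, (η * max (E k - γ k ^ 2 * κG ^ 2) 0 -
              max (γ k ^ 2 * η ^ 4 * κG ^ 2 - E k) 0 / η))) ∧
    (AntitoneOn (fun κG : ℝ =>
        ∑ k, (η * max (E k - γ k ^ 2 * κG ^ 2) 0 -
              max (γ k ^ 2 * η ^ 4 * κG ^ 2 - E k) 0 / η)) (Set.Ici 0)) ∧
    (0 < ∑ k, (η * max (E k - γ k ^ 2 * (0:ℝ) ^ 2) 0 -
              max (γ k ^ 2 * η ^ 4 * (0:ℝ) ^ 2 - E k) 0 / η)) ∧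
    (∃ κG : ℝ, 0 ≤ κG ∧
      ∑ k, (η * max (E k - γ k ^ 2 * κG ^ 2) 0 -
            max (γ k ^ 2 * η ^ 4 * κG ^ 2 - E k) 0 / η) = 0) := by

  have hne : (Finset.univ : Finset (Fin N)).Nonempty := by
    simpa [Finset.univ_nonempty_iff, Fin.pos_iff_nonempty] using hN
  set f : ℝ → ℝ := fun κG : ℝ =>
        ∑ k, (η * max (E k - γ k ^ 2 * κG ^ 2) 0 -
              max (γ k ^ 2 * η ^ 4 * κG ^ 2 - E k) 0 / η) with hf
  have hcont : Continuous f := by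
    apply continuous_finset_sum
    intro k _
    fun_prop
  have hanti : AntitoneOn f (Set.Ici 0) := by
    intro a ha b hb hab
    apply Finset.sum_le_sum
    intro k _
    have hsq : a ^ 2 ≤ b ^ 2 := pow_le_pow_left₀ ha hab 2
    have hγ2 : (0:ℝ) ≤ γ k ^ 2 := sq_nonneg _
    have h1 : γ k ^ 2 * a ^ 2 ≤ γ k ^ 2 * b ^ 2 := by nlinarith
    have h2 : γ k ^ 2 * η ^ 4 * a ^ 2 ≤ γ k ^ 2 * η ^ 4 * b ^ 2 :=
      mul_le_mul_of_nonneg_left hsq (by positivity)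
    have m1 : max (E k - γ k ^ 2 * b ^ 2) 0 ≤ max (E k - γ k ^ 2 * a ^ 2) 0 :=
      max_le_max (by linarith) le_rfl
    have m2 : max (γ k ^ 2 * η ^ 4 * a ^ 2 - E k) 0 ≤
        max (γ k ^ 2 * η ^ 4 * b ^ 2 - E k) 0 := max_le_max (by linarith) le_rfl
    have d2 : max (γ k ^ 2 * η ^ 4 * a ^ 2 - E k) 0 / η ≤
        max (γ k ^ 2 * η ^ 4 * b ^ 2 - E k) 0 / η := (div_le_div_iff_of_pos_right hη1).mpr m2
    have := mul_le_mul_of_nonneg_left m1 hη1.le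
    linarith
  have hpos : 0 < f 0 := by
    have : f 0 = ∑ k, η * E k := by
      apply Finset.sum_congr rfl
      intro k _
      have hEk := hE k
      rw [show γ k ^ 2 * (0:ℝ) ^ 2 = 0 by ring, show γ k ^ 2 * η ^ 4 * (0:ℝ) ^ 2 = 0 by ring]
      rw [max_eq_left (by linarith), max_eq_right (by linarith)]
      ring
    rw [this]
    exact Finset.sum_pos (fun k _ => mul_pos hη1 (hE k)) hne
  refine ⟨?_, hcont, hanti, hpos, ?_⟩
  · intro κG hκG κL k
    have hκL2 : γ k ^ 2 * κL ^ 2 ≤ γ k ^ 2 * κG ^ 2 := by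
      have hη4 : η ^ 4 ≤ 1 := by
        simpa using pow_le_pow_left₀ hη1.le hη2.le 4
      have hL : κL ^ 2 = η ^ 4 * κG ^ 2 := by
        show (η ^ 2 * κG) ^ 2 = _; ring
      nlinarith [sq_nonneg (γ k), sq_nonneg κG, sq_nonneg (γ k * κG)]
    refine ⟨fun h => ?_, fun h => ?_, fun h1 h2 => ?_⟩
    · exact min_eq_left (le_max_of_le_right h.le)
    · rw [max_eq_left h.le]; exact min_eq_right hκL2
    · rw [max_eq_right h1]; exact min_eq_right h2
  · -- existence of zero
    set A := Finset.univ.sup' hne (fun k => E k / (γ k ^ 2 * η ^ 4)) with hA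
    have hApos : 0 < A := by
      obtain ⟨k, hk⟩ := hne
      have h1 : E k / (γ k ^ 2 * η ^ 4) ≤ A :=
        Finset.le_sup' (fun k => E k / (γ k ^ 2 * η ^ 4)) hk
      have h2 : 0 < E k / (γ k ^ 2 * η ^ 4) :=
        div_pos (hE k) (by have := hγ k; positivity)
      linarith
    set M := Real.sqrt A with hM
    have hM0 : 0 ≤ M := Real.sqrt_nonneg _
    have hM2 : M ^ 2 = A := Real.sq_sqrt hApos.le
    have hfM : f M ≤ 0 := by
      apply Finset.sum_nonpos
      intro k _
      have hden : 0 < γ k ^ 2 * η ^ 4 := by have := hγ k; positivity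
      have hle : E k / (γ k ^ 2 * η ^ 4) ≤ A :=
        Finset.le_sup' (fun k => E k / (γ k ^ 2 * η ^ 4)) (Finset.mem_univ k)
      have hEle : E k ≤ γ k ^ 2 * η ^ 4 * M ^ 2 := by
        rw [hM2]
        calc E k = (E k / (γ k ^ 2 * η ^ 4)) * (γ k ^ 2 * η ^ 4) := by
              exact (div_mul_cancel₀ _ hden.ne').symm
          _ ≤ A * (γ k ^ 2 * η ^ 4) := by nlinarith
          _ = γ k ^ 2 * η ^ 4 * A := by ring
      have hη4 : η ^ 4 ≤ 1 := by
        simpa using pow_le_pow_left₀ hη1.le hη2.le 4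
      have hEle2 : E k ≤ γ k ^ 2 * M ^ 2 := by
        nlinarith [mul_nonneg (sq_nonneg (γ k * M)) (sub_nonneg.mpr hη4)]
      rw [max_eq_right (by linarith), max_eq_left (by linarith)]
      have : 0 ≤ (γ k ^ 2 * η ^ 4 * M ^ 2 - E k) / η := by
        apply div_nonneg (by linarith) hη1.le
      linarith
    have h0M : (0:ℝ) ≤ M := hM0
    have := intermediate_value_Icc' h0M (hcont.continuousOn)
    have hmem : (0:ℝ) ∈ Set.Icc (f M) (f 0) := ⟨hfM, hpos.le⟩
    obtain ⟨κ, hκmem, hκ⟩ := this hmem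
    exact ⟨κ, hκmem.1, hκ⟩
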